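/- Let Ω ⊂ ℝ³ be a nonempty open bounded set. Then there exist x ∈ Ω and r > 0 such that: (i) B(x,r) ⊆ Ω; (ii) r is maximal, i.e., r = sup{ ρ > 0 : there is an open ball of radius ρ contained in Ω }; and (iii) every closed hemisphere of ∂B(x,r) meets ∂Ω — that is, for every unit vector w ∈ ℝ³ there exists y ∈ ∂Ω with |y − x| = r and ⟨y − x, w⟩ ≥ 0. -/

import Mathlib

open Metric Set

noncomputable abbrev E3 := EuclideanSpace ℝ (Fin 3)

theorem exists_maximal_inscribed_ball
    (Ω : Set E3) (hΩo : IsOpen Ω) (hΩb : Bornology.IsBounded Ω) (hΩne : Ω.Nonempty) :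
    ∃ (x : E3) (r : ℝ), 0 < r ∧ ball x r ⊆ Ω ∧
      r = sSup {ρ : ℝ | 0 < ρ ∧ ∃ y : E3, ball y ρ ⊆ Ω} ∧
      ∀ w : E3, ‖w‖ = 1 →
        ∃ y ∈ frontier Ω, dist y x = r ∧ (0:ℝ) ≤ inner ℝ (y - x) w := by
  classical
  -- Ωᶜ is nonempty (Ω is bounded)
  have hcne : Ωᶜ.Nonempty := by
    by_contra h
    rw [Set.not_nonempty_iff_eq_empty, Set.compl_empty_iff] at h
    subst h
    exact NormedSpace.unbounded_univ ℝ E3 hΩb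
  -- f y = infDist y Ωᶜ is continuous; maximize over compact closure Ω
  set f : E3 → ℝ := fun y => infDist y Ωᶜ with hf
  have hfc : Continuous f := continuous_infDist_pt _
  have hclc : IsCompact (closure Ω) := hΩb.isCompact_closure
  obtain ⟨x, hxcl, hxmax⟩ := hclc.exists_isMaxOn hΩne.closure hfc.continuousOn
  obtain ⟨x₀, hx₀⟩ := hΩne
  set r : ℝ := f x with hr
  have hfx₀ : 0 < f x₀ := by
    have : x₀ ∉ Ωᶜ := fun h => h hx₀
    exact (hΩo.isClosed_compl.notMem_iff_infDist_pos hcne).1 this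
  have hrpos : 0 < r := lt_of_lt_of_le hfx₀ (hxmax (subset_closure hx₀))
  -- x ∈ Ω
  have hxΩ : x ∈ Ω := by
    by_contra hx
    have : x ∈ closure Ωᶜ := subset_closure hx
    have : f x = 0 := infDist_zero_of_mem_closure this
    linarith
  -- ball x r ⊆ Ω
  have hball : ball x r ⊆ Ω := by
    intro z hz
    by_contra hzc
    exact (disjoint_ball_infDist (x := x) (s := Ωᶜ)).le_bot ⟨hz, hzc⟩
  -- any inscribed ball radius is ≤ r
  set S : Set ℝ := {ρ : ℝ | 0 < ρ ∧ ∃ y : E3, ball y ρ ⊆ Ω} with hS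
  have hSle : ∀ ρ ∈ S, ρ ≤ r := by
    rintro ρ ⟨hρ, y, hy⟩
    have hyΩ : y ∈ Ω := hy (mem_ball_self hρ)
    have h1 : ρ ≤ f y := by
      by_contra h
      push_neg at h
      obtain ⟨z, hz1, hz2⟩ := (infDist_lt_iff hcne).1 h
      exact hz1 (hy (by rwa [mem_ball, dist_comm]))
    exact h1.trans (hxmax (subset_closure hyΩ))
  have hSne : S.Nonempty := ⟨r, hrpos, x, hball⟩
  have hSbdd : BddAbove S := ⟨r, hSle⟩
  have hrsup : r = sSup S := le_antisymm (le_csSup hSbdd ⟨hrpos, x, hball⟩) (csSup_le hSne hSle)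
  refine ⟨x, r, hrpos, hball, hrsup, ?_⟩
  -- hemisphere condition
  intro w hw
  by_contra hcon
  push_neg at hcon
  -- K = closed half-ball
  set K : Set E3 := closedBall x r ∩ {y | (0:ℝ) ≤ inner ℝ (y - x) w} with hK
  have hKcpt : IsCompact K :=
    (isCompact_closedBall x r).inter_right
      (isClosed_le continuous_const ((continuous_id.sub continuous_const).inner continuous_const))
  have hKΩ : K ⊆ Ω := by
    rintro y ⟨hy1, hy2⟩
    have hycl : y ∈ closure Ω := by
      have : y ∈ closure (ball x r) := by rwa [closure_ball x hrpos.ne']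
      exact closure_mono hball this
    rcases (lt_or_eq_of_le (mem_closedBall.1 hy1)) with h | h
    · exact hball h
    · by_contra hyΩ
      have hyfr : y ∈ frontier Ω := by
        rw [hΩo.frontier_eq]; exact ⟨hycl, hyΩ⟩
      exact absurd hy2 (not_le.2 (hcon y hyfr h))
  obtain ⟨ε, hε, hthick⟩ := hKcpt.exists_thickening_subset_open hΩo hKΩ
  -- choose parameters
  set t : ℝ := ε / 2 with ht
  set δ : ℝ := min 1 (min (ε / 4) (t ^ 2 / (2 * r + 2))) with hδ
  have htpos : 0 < t := by positivity
  have hδpos : 0 < δ := lt_min one_pos (lt_min (by positivity) (by positivity))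
  have hδ1 : δ + t < ε := by
    have : δ ≤ ε / 4 := le_trans (min_le_right _ _) (min_le_left _ _)
    linarith
  have hδ2 : 2 * r * δ + δ ^ 2 < t ^ 2 := by
    have h1 : δ ≤ t ^ 2 / (2 * r + 2) := le_trans (min_le_right _ _) (min_le_right _ _)
    have h1' : δ * (2 * r + 2) ≤ t ^ 2 := (le_div_iff₀ (by positivity)).1 h1
    have h0 : δ ≤ 1 := min_le_left _ _
    have hsq : δ ^ 2 ≤ δ := by nlinarith
    nlinarith
  -- the bigger ball is inside Ω
  have hbig : ball (x + t • w) (r + δ) ⊆ Ω := by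
    intro z hz
    rw [mem_ball] at hz
    have hzd : ‖z - (x + t • w)‖ < r + δ := by rwa [← dist_eq_norm]
    set u : E3 := z - (x + t • w) with hu
    have hzx : z - x = u + t • w := by rw [hu]; abel
    have hnorm : ‖z - x‖ ^ 2 = ‖u‖ ^ 2 + 2 * (t * inner ℝ u w) + t ^ 2 := by
      rw [hzx, norm_add_sq_real, norm_smul, real_inner_smul_right]
      simp [hw, abs_of_pos htpos]
      try ring
    have hinner : (inner ℝ (z - x) w : ℝ) = inner ℝ u w + t := by
      rw [hzx, inner_add_left, real_inner_smul_left, real_inner_self_eq_norm_sq]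
      simp [hw]
    rcases le_or_gt (inner ℝ (z - x) w : ℝ) 0 with hc | hc
    · -- z is in ball x r
      have hiu : (inner ℝ u w : ℝ) ≤ -t := by linarith
      have hprod : t * (inner ℝ u w : ℝ) ≤ t * (-t) := mul_le_mul_of_nonneg_left hiu htpos.le
      have hprod' : t * (-t) = -t ^ 2 := by ring
      have hle : ‖z - x‖ ^ 2 ≤ ‖u‖ ^ 2 - t ^ 2 := by linarith
      have hu2 : ‖u‖ ^ 2 < (r + δ) ^ 2 := by
        apply pow_lt_pow_left₀ hzd (norm_nonneg u)
        norm_num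
      have hexp : (r + δ) ^ 2 = r ^ 2 + (2 * r * δ + δ ^ 2) := by ring
      have hlt : ‖z - x‖ ^ 2 < r ^ 2 := by linarith
      have hfin : ‖z - x‖ < r := lt_of_pow_lt_pow_left₀ 2 hrpos.le hlt
      exact hball (by rwa [mem_ball, dist_eq_norm])
    · rcases le_or_gt ‖z - x‖ r with hzr | hzr
      · exact hKΩ ⟨by rwa [mem_closedBall, dist_eq_norm], le_of_lt hc⟩
      · -- project onto sphere
        set p : E3 := x + (r / ‖z - x‖) • (z - x) with hp
        have hzxpos : (0:ℝ) < ‖z - x‖ := hrpos.trans hzr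
        have hzxne : ‖z - x‖ ≠ 0 := hzxpos.ne'
        have hpK : p ∈ K := by
          constructor
          · rw [mem_closedBall, dist_eq_norm]
            have : p - x = (r / ‖z - x‖) • (z - x) := by rw [hp]; abel
            rw [this, norm_smul, Real.norm_eq_abs, abs_of_pos (div_pos hrpos hzxpos),
              div_mul_cancel₀ _ hzxne]
          · have : p - x = (r / ‖z - x‖) • (z - x) := by rw [hp]; abel
            rw [Set.mem_setOf_eq, this, real_inner_smul_left]
            exact mul_nonneg (div_pos hrpos hzxpos).le hc.le
        have hdzp : dist z p < ε := by
          have h1 : z - p = (1 - r / ‖z - x‖) • (z - x) := by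
            rw [hp, sub_smul, one_smul]; abel
          have h2 : dist z p = ‖z - x‖ - r := by
            rw [dist_eq_norm, h1, norm_smul, Real.norm_eq_abs,
              abs_of_nonneg (by rw [sub_nonneg, div_le_one hzxpos]; exact hzr.le)]
            field_simp
          have h3 : ‖z - x‖ ≤ ‖u‖ + t := by
            calc ‖z - x‖ = ‖u + t • w‖ := by rw [hzx]
            _ ≤ ‖u‖ + ‖t • w‖ := norm_add_le _ _
            _ = ‖u‖ + t := by rw [norm_smul, Real.norm_eq_abs, abs_of_pos htpos, hw, mul_one]
          rw [h2]; linarith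
        exact hthick (mem_thickening_iff.2 ⟨p, hpK, hdzp⟩)
  -- contradiction with maximality
  have : r + δ ∈ S := ⟨by linarith, x + t • w, hbig⟩
  linarith [hSle _ this]
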